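/- Let g > 0, T_max > 0, ε_max ∈ (0, π/2) define V_c, and suppose the box B̄ = {v = (v₁,v₂,v₃) ∈ ℝ³ : |vᵢ| ≤ v̄ᵢ, i = 1,2,3} (with v̄ᵢ > 0) is contained in V_c. Let Q_w be a symmetric positive definite 6×6 matrix with P_w = Q_w⁻¹ and β > 0 such that: (i) for each i ∈ {1,2,3}, the 7×7 block matrix [[v̄ᵢ², bᵢᵀ],[bᵢ, Q_w]] is positive semidefinite, where bᵢ ∈ ℝ⁶ is the i-th column of B; and (ii) Q_w Aᵀ + A Q_w − 2 B Bᵀ + β·Q_w + β⁻¹·E Eᵀ ⪯ 0 for a given 6×p matrix E. Fix γ ≥ 1, let w : [0,∞) → ℝᵖ satisfy ‖w(t)‖₂ ≤ 1 for all t, and let ξ : [0,∞) → ℝ⁶ be differentiable with ξ'(t) = A ξ(t) + B·sat(−γ BᵀP_w ξ(t)) + E w(t). If ξ(0)ᵀP_w ξ(0) ≤ 1, then ξ(t)ᵀP_w ξ(t) ≤ 1 for all t ≥ 0; i.e., the ellipsoid E_w = {ξ : ξᵀP_w ξ ≤ 1} is robustly positively invariant under the saturated controller. -/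

import Mathlib

open Matrix Set

noncomputable section

/-- The convex input-constraint set `V_c` in the flat output space. -/
def Vc (g Tmax εmax : ℝ) : Set (Fin 3 → ℝ) :=
  {v | (v 0) ^ 2 + (v 1) ^ 2 + (v 2 + g) ^ 2 ≤ Tmax ^ 2 ∧
       (v 0) ^ 2 + (v 1) ^ 2 ≤ (Real.tan εmax) ^ 2 * (v 2 + g) ^ 2 ∧
       -g ≤ v 2}

/-- Saturation factor `λ*(w) = sup {λ ∈ (0,1] : λ w ∈ K}`. -/
def lamStar (K : Set (Fin 3 → ℝ)) (w : Fin 3 → ℝ) : ℝ :=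
  sSup {l : ℝ | l ∈ Set.Ioc (0 : ℝ) 1 ∧ l • w ∈ K}

/-- Saturated vector `sat(w) = λ*(w) w`. -/
def sat (K : Set (Fin 3 → ℝ)) (w : Fin 3 → ℝ) : Fin 3 → ℝ :=
  lamStar K w • w

/-- Quadcopter state matrix `A = [[0,I],[0,0]]`. -/
def quadA : Matrix (Fin 3 ⊕ Fin 3) (Fin 3 ⊕ Fin 3) ℝ :=
  Matrix.fromBlocks 0 1 0 0

/-- Quadcopter input matrix `B = [0; I]`. -/
def quadB : Matrix (Fin 3 ⊕ Fin 3) (Fin 3) ℝ :=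
  Matrix.of (Sum.elim (fun _ _ => (0 : ℝ)) (fun i j => if i = j then 1 else 0))

/-- helper: move a matrix across a dot product. -/
lemma dot_mulVec_transpose {m n : Type*} [Fintype m] [Fintype n]
    (M : Matrix m n ℝ) (u : m → ℝ) (z : n → ℝ) :
    u ⬝ᵥ (M *ᵥ z) = (Mᵀ *ᵥ u) ⬝ᵥ z := by
  have h := Matrix.vecMul_transpose (A := Mᵀ) (x := u)
  rw [Matrix.transpose_transpose] at h
  rw [dotProduct_mulVec, h]

lemma dot_self_nonneg {n : Type*} [Fintype n] (v : n → ℝ) : 0 ≤ v ⬝ᵥ v :=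
  Finset.sum_nonneg fun i _ => mul_self_nonneg (v i)

/-- AM–GM for dot products. -/
lemma dot_amgm {n : Type*} [Fintype n] (β : ℝ) (hβ : 0 < β) (e w : n → ℝ) :
    2 * (e ⬝ᵥ w) ≤ β⁻¹ * (e ⬝ᵥ e) + β * (w ⬝ᵥ w) := by
  have h : 0 ≤ (e - β • w) ⬝ᵥ (e - β • w) := dot_self_nonneg _
  have hexp : (e - β • w) ⬝ᵥ (e - β • w)
      = e ⬝ᵥ e - 2 * β * (e ⬝ᵥ w) + β ^ 2 * (w ⬝ᵥ w) := by
    simp only [dotProduct_sub, sub_dotProduct, dotProduct_smul,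
      smul_dotProduct, smul_eq_mul]
    rw [dotProduct_comm w e]
    ring
  rw [hexp] at h
  rw [← mul_le_mul_iff_right₀ hβ]
  have hrhs : β * (β⁻¹ * (e ⬝ᵥ e) + β * (w ⬝ᵥ w)) = e ⬝ᵥ e + β ^ 2 * (w ⬝ᵥ w) := by
    field_simp
  rw [hrhs]
  nlinarith [h]

theorem stmt11 (p : ℕ)
    (g Tmax εmax : ℝ) (hg : 0 < g) (hT : 0 < Tmax) (hεmax : εmax ∈ Set.Ioo 0 (Real.pi / 2))
    (vbar : Fin 3 → ℝ) (hvbar : ∀ i, 0 < vbar i)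
    (hbox : {v : Fin 3 → ℝ | ∀ i, |v i| ≤ vbar i} ⊆ Vc g Tmax εmax)
    (Qw : Matrix (Fin 3 ⊕ Fin 3) (Fin 3 ⊕ Fin 3) ℝ) (hQsym : Qw.IsSymm) (hQ : Qw.PosDef)
    (Pw : Matrix (Fin 3 ⊕ Fin 3) (Fin 3 ⊕ Fin 3) ℝ) (hPw : Pw = Qw⁻¹)
    (β : ℝ) (hβ : 0 < β)
    (E : Matrix (Fin 3 ⊕ Fin 3) (Fin p) ℝ)
    (hblock : ∀ i : Fin 3,
      (Matrix.fromBlocks (Matrix.of fun (_ _ : Fin 1) => (vbar i) ^ 2)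
        (Matrix.of fun (_ : Fin 1) r => quadB r i)
        (Matrix.of fun r (_ : Fin 1) => quadB r i) Qw).PosSemidef)
    (hLMI : (-(Qw * quadAᵀ + quadA * Qw - (2 : ℝ) • (quadB * quadBᵀ) + β • Qw +
        β⁻¹ • (E * Eᵀ))).PosSemidef)
    (γ : ℝ) (hγ : 1 ≤ γ)
    (w : ℝ → (Fin p → ℝ)) (hw : ∀ t ≥ (0 : ℝ), w t ⬝ᵥ w t ≤ 1)
    (ξ : ℝ → (Fin 3 ⊕ Fin 3 → ℝ))
    (hdyn : ∀ t ≥ (0 : ℝ), HasDerivAt ξ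
      (quadA *ᵥ ξ t + quadB *ᵥ sat (Vc g Tmax εmax) (-(γ • (quadBᵀ *ᵥ (Pw *ᵥ ξ t)))) +
        E *ᵥ w t) t)
    (h0 : ξ 0 ⬝ᵥ (Pw *ᵥ ξ 0) ≤ 1) :
    ∀ t ≥ (0 : ℝ), ξ t ⬝ᵥ (Pw *ᵥ ξ t) ≤ 1 := by
  have hγ0 : (0:ℝ) < γ := lt_of_lt_of_le one_pos hγ
  -- matrix preliminaries
  have hdet : IsUnit Qw.det := (Matrix.isUnit_iff_isUnit_det Qw).mp hQ.isUnit
  have hQP : Qw * Pw = 1 := by rw [hPw]; exact Matrix.mul_nonsing_inv Qw hdet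
  have hPsym : Pwᵀ = Pw := by
    rw [hPw, Matrix.transpose_nonsing_inv, hQsym]
  have hQPv : ∀ x, Qw *ᵥ (Pw *ᵥ x) = x := by
    intro x; rw [Matrix.mulVec_mulVec, hQP, Matrix.one_mulVec]
  have hsymP : ∀ u z, u ⬝ᵥ (Pw *ᵥ z) = (Pw *ᵥ u) ⬝ᵥ z := by
    intro u z; rw [dot_mulVec_transpose, hPsym]
  have hsymQ : ∀ u z, u ⬝ᵥ (Qw *ᵥ z) = (Qw *ᵥ u) ⬝ᵥ z := by
    intro u z; rw [dot_mulVec_transpose, hQsym]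
  -- abbreviations
  set K : Set (Fin 3 → ℝ) := Vc g Tmax εmax with hK
  set V : ℝ → ℝ := fun t => ξ t ⬝ᵥ (Pw *ᵥ ξ t) with hV
  set F : ℝ → (Fin 3 ⊕ Fin 3 → ℝ) := fun t =>
    quadA *ᵥ ξ t + quadB *ᵥ sat K (-(γ • (quadBᵀ *ᵥ (Pw *ᵥ ξ t)))) + E *ᵥ w t with hF
  set D : ℝ → ℝ := fun t => 2 * (ξ t ⬝ᵥ (Pw *ᵥ F t)) with hD
  -- L1 : coordinate bound from the block LMI
  have hbdot : ∀ (i : Fin 3) (z : Fin 3 ⊕ Fin 3 → ℝ),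
      (fun r => quadB r i) ⬝ᵥ z = z (Sum.inr i) := by
    intro i z
    simp [quadB, dotProduct, Fintype.sum_sum_type, ite_mul, one_mul, zero_mul]
  have hL1 : ∀ (i : Fin 3) (y : Fin 3 ⊕ Fin 3 → ℝ),
      (y (Sum.inr i)) ^ 2 ≤ (vbar i) ^ 2 * (y ⬝ᵥ (Qw *ᵥ y)) := by
    intro i y
    have key : ∀ c : ℝ, 0 ≤ (vbar i) ^ 2 * (c * c) + (2 * y (Sum.inr i)) * c
        + y ⬝ᵥ (Qw *ᵥ y) := by
      intro c
      have h := (hblock i).dotProduct_mulVec_nonneg (Sum.elim (fun _ => c) y)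
      rw [star_trivial, Matrix.fromBlocks_mulVec, sumElim_dotProduct_sumElim] at h
      simp only [Sum.elim_comp_inl, Sum.elim_comp_inr, dotProduct_add] at h
      have e1 : ((fun _ : Fin 1 => c) ⬝ᵥ (Matrix.of fun (_ _ : Fin 1) => (vbar i) ^ 2) *ᵥ
          (fun _ => c)) = vbar i ^ 2 * (c * c) := by
        simp [dotProduct, Matrix.mulVec, Fin.sum_univ_one]; ring
      have e2 : ((fun _ : Fin 1 => c) ⬝ᵥ (Matrix.of fun (_ : Fin 1) r => quadB r i) *ᵥ y)
          = c * y (Sum.inr i) := by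
        have : ((Matrix.of fun (_ : Fin 1) r => quadB r i) *ᵥ y) = fun _ => y (Sum.inr i) := by
          funext j
          show (fun r => quadB r i) ⬝ᵥ y = y (Sum.inr i)
          exact hbdot i y
        rw [this]
        simp [dotProduct, Fin.sum_univ_one]
      have e3 : (y ⬝ᵥ (Matrix.of fun r (_ : Fin 1) => quadB r i) *ᵥ (fun _ => c))
          = y (Sum.inr i) * c := by
        have h1 : ((Matrix.of fun r (_ : Fin 1) => quadB r i) *ᵥ (fun _ => c))
            = c • (fun r => quadB r i) := by
          funext r
          simp [Matrix.mulVec, dotProduct, Fin.sum_univ_one, mul_comm]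
        rw [h1, dotProduct_smul, smul_eq_mul, dotProduct_comm, hbdot]
        ring
      rw [e1, e2, e3] at h
      nlinarith [h]
    have hd := discrim_le_zero key
    rw [discrim] at hd
    nlinarith [hd]
  -- L2 : the Lyapunov LMI inequality in quadratic form
  have hL2 : ∀ x : Fin 3 ⊕ Fin 3 → ℝ,
      2 * ((Pw *ᵥ x) ⬝ᵥ (quadA *ᵥ x))
        - 2 * ((quadBᵀ *ᵥ (Pw *ᵥ x)) ⬝ᵥ (quadBᵀ *ᵥ (Pw *ᵥ x)))
        + β * (x ⬝ᵥ (Pw *ᵥ x))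
        + β⁻¹ * ((Eᵀ *ᵥ (Pw *ᵥ x)) ⬝ᵥ (Eᵀ *ᵥ (Pw *ᵥ x))) ≤ 0 := by
    intro x
    set y := Pw *ᵥ x with hy
    have h := hLMI.dotProduct_mulVec_nonneg y
    rw [star_trivial, Matrix.neg_mulVec, dotProduct_neg, neg_nonneg] at h
    have hexp : (Qw * quadAᵀ + quadA * Qw - (2:ℝ) • (quadB * quadBᵀ) + β • Qw
        + β⁻¹ • (E * Eᵀ)) *ᵥ y
        = Qw *ᵥ (quadAᵀ *ᵥ y) + quadA *ᵥ (Qw *ᵥ y)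
          - (2:ℝ) • (quadB *ᵥ (quadBᵀ *ᵥ y)) + β • (Qw *ᵥ y)
          + β⁻¹ • (E *ᵥ (Eᵀ *ᵥ y)) := by
      simp only [Matrix.add_mulVec, Matrix.sub_mulVec, Matrix.smul_mulVec,
        Matrix.mulVec_mulVec]
    rw [hexp] at h
    simp only [dotProduct_add, dotProduct_sub, dotProduct_smul,
      smul_eq_mul] at h
    have t1 : y ⬝ᵥ (Qw *ᵥ (quadAᵀ *ᵥ y)) = (Pw *ᵥ x) ⬝ᵥ (quadA *ᵥ x) := by
      rw [hsymQ, hQPv, dot_mulVec_transpose, Matrix.transpose_transpose, ← hy]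
      exact dotProduct_comm _ _
    have t2 : y ⬝ᵥ (quadA *ᵥ (Qw *ᵥ y)) = (Pw *ᵥ x) ⬝ᵥ (quadA *ᵥ x) := by
      rw [hy, hQPv]
    have t3 : y ⬝ᵥ (quadB *ᵥ (quadBᵀ *ᵥ y)) = (quadBᵀ *ᵥ y) ⬝ᵥ (quadBᵀ *ᵥ y) := by
      rw [dot_mulVec_transpose]
    have t4 : y ⬝ᵥ (Qw *ᵥ y) = x ⬝ᵥ (Pw *ᵥ x) := by
      rw [hsymQ, hy, hQPv]
    have t5 : y ⬝ᵥ (E *ᵥ (Eᵀ *ᵥ y)) = (Eᵀ *ᵥ y) ⬝ᵥ (Eᵀ *ᵥ y) := by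
      rw [dot_mulVec_transpose]
    rw [t1, t2, t3, t4, t5] at h
    linarith [h]
  -- derivative of V
  have hVd : ∀ t, 0 ≤ t → HasDerivAt V (D t) t := by
    intro t ht
    have hx : ∀ i, HasDerivAt (fun s => ξ s i) (F t i) t :=
      hasDerivAt_pi.mp (hdyn t ht)
    have hPx : ∀ i, HasDerivAt (fun s => (Pw *ᵥ ξ s) i) ((Pw *ᵥ F t) i) t := by
      intro i
      have : HasDerivAt (fun s => ∑ j, Pw i j * ξ s j) (∑ j, Pw i j * F t j) t :=
        HasDerivAt.fun_sum fun j _ => (hx j).const_mul _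
      simpa [Matrix.mulVec, dotProduct] using this
    have hsum : HasDerivAt (fun s => ∑ i, ξ s i * (Pw *ᵥ ξ s) i)
        (∑ i, (F t i * (Pw *ᵥ ξ t) i + ξ t i * (Pw *ᵥ F t) i)) t :=
      HasDerivAt.fun_sum fun i _ => (hx i).mul (hPx i)
    have hVeq : V = fun s => ∑ i, ξ s i * (Pw *ᵥ ξ s) i := by
      funext s; simp [hV, dotProduct]
    rw [hVeq]
    convert hsum using 1
    have : F t ⬝ᵥ (Pw *ᵥ ξ t) = ξ t ⬝ᵥ (Pw *ᵥ F t) := by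
      rw [hsymP, dotProduct_comm]
    simp only [hD]
    rw [Finset.sum_add_distrib]
    have h1 : ∑ i, F t i * (Pw *ᵥ ξ t) i = F t ⬝ᵥ (Pw *ᵥ ξ t) := rfl
    have h2 : ∑ i, ξ t i * (Pw *ᵥ F t) i = ξ t ⬝ᵥ (Pw *ᵥ F t) := rfl
    rw [h1, h2, this]; ring
  -- the key derivative inequality above the unit level set
  set c : ℝ := ∑ i, (vbar i) ^ 2 with hc
  have hc0 : 0 ≤ c := Finset.sum_nonneg fun i _ => sq_nonneg _
  have claim : ∀ t, 0 ≤ t → 1 ≤ V t → D t ≤ 2 * c * (V t - 1) := by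
    intro t ht hV1
    set x := ξ t with hxdef
    set y := Pw *ᵥ x with hy
    set v := quadBᵀ *ᵥ y with hv
    set e := Eᵀ *ᵥ y with he
    have hVpos : (0:ℝ) < V t := lt_of_lt_of_le one_pos hV1
    -- coordinate bounds
    have hcoord : ∀ i, (v i) ^ 2 ≤ (vbar i) ^ 2 * V t := by
      intro i
      have h1 := hL1 i y
      have hbv : v i = y (Sum.inr i) := by
        show (fun r => quadBᵀ i r) ⬝ᵥ y = y (Sum.inr i)
        have : (fun r => quadBᵀ i r) = fun r => quadB r i := rfl
        rw [this, hbdot]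
      have hyq : y ⬝ᵥ (Qw *ᵥ y) = V t := by
        rw [hsymQ, hy, hQPv]
      rw [hyq] at h1
      rw [hbv]
      exact h1
    -- lower bound on the saturation factor
    have hlam : 1 / (γ * V t) ≤ lamStar K (-(γ • v)) := by
      apply le_csSup
      · exact ⟨1, fun z hz => hz.1.2⟩
      · constructor
        · constructor
          · positivity
          · rw [div_le_one (by positivity)]
            nlinarith
        · apply hbox
          intro i
          have : (1 / (γ * V t)) • (-(γ • v)) = fun j => -(v j / V t) := by
            funext j
            simp only [Pi.smul_apply, Pi.neg_apply, smul_eq_mul]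
            field_simp
          rw [this]
          have h2 := hcoord i
          have habs : |v i| ≤ vbar i * V t := by
            nlinarith [abs_nonneg (v i), sq_abs (v i), hvbar i, hVpos,
              mul_pos (hvbar i) hVpos]
          rw [abs_neg, abs_div, abs_of_pos hVpos]
          rw [div_le_iff₀ hVpos]
          calc |v i| ≤ vbar i * V t := habs
            _ ≤ vbar i * V t := le_refl _
    -- the derivative formula
    have hDform : D t = 2 * (y ⬝ᵥ (quadA *ᵥ x)) - 2 * (lamStar K (-(γ • v)) * γ) * (v ⬝ᵥ v)
        + 2 * (e ⬝ᵥ w t) := by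
      have hsat : quadB *ᵥ sat K (-(γ • v)) = -((lamStar K (-(γ • v)) * γ) • (quadB *ᵥ v)) := by
        rw [sat]
        rw [Matrix.mulVec_smul]
        rw [Matrix.mulVec_neg, Matrix.mulVec_smul]
        funext j
        simp only [Pi.neg_apply, Pi.smul_apply, smul_eq_mul, neg_neg]
        ring
      have hxPB : x ⬝ᵥ (Pw *ᵥ (quadB *ᵥ v)) = v ⬝ᵥ v := by
        rw [hsymP, ← hy, dot_mulVec_transpose, ← hv]
      have hxPE : x ⬝ᵥ (Pw *ᵥ (E *ᵥ w t)) = e ⬝ᵥ w t := by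
        rw [hsymP, ← hy, dot_mulVec_transpose, ← he]
      have hxPA : x ⬝ᵥ (Pw *ᵥ (quadA *ᵥ x)) = y ⬝ᵥ (quadA *ᵥ x) := by
        rw [hsymP, ← hy]
      simp only [hD, hF]
      rw [← hxdef, ← hy, ← hv, hsat]
      rw [Matrix.mulVec_add, Matrix.mulVec_add, Matrix.mulVec_neg, Matrix.mulVec_smul]
      rw [dotProduct_add, dotProduct_add, dotProduct_neg,
        dotProduct_smul]
      rw [hxPA, hxPE]
      have : x ⬝ᵥ (Pw *ᵥ (quadB *ᵥ v)) = v ⬝ᵥ v := hxPB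
      rw [this]
      simp only [smul_eq_mul]
      ring
    -- assemble
    have hκ : 1 / V t ≤ lamStar K (-(γ • v)) * γ := by
      have := mul_le_mul_of_nonneg_right hlam hγ0.le
      calc 1 / V t = 1 / (γ * V t) * γ := by field_simp
        _ ≤ lamStar K (-(γ • v)) * γ := this
    have hvv : 0 ≤ v ⬝ᵥ v := dot_self_nonneg v
    have hvvV : v ⬝ᵥ v ≤ c * V t := by
      rw [hc]
      have : v ⬝ᵥ v = ∑ i, (v i) ^ 2 := by
        simp [dotProduct, sq]
      rw [this, Finset.sum_mul]
      exact Finset.sum_le_sum fun i _ => hcoord i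
    have hamgm := dot_amgm β hβ e (w t)
    have hwt := hw t ht
    have hlmi := hL2 x
    rw [← hy, ← hv, ← he] at hlmi
    have hVt : x ⬝ᵥ (Pw *ᵥ x) = V t := rfl
    rw [hVt] at hlmi
    rw [hDform]
    -- D ≤ 2(y·Ax) - (2/Vt)(v·v) + β⁻¹ e·e + β w·w, then use hlmi
    have hsatterm : -(2 * (lamStar K (-(γ • v)) * γ) * (v ⬝ᵥ v)) ≤ -(2 / V t * (v ⬝ᵥ v)) := by
      have := mul_le_mul_of_nonneg_right hκ hvv
      have h2 : 2 / V t * (v ⬝ᵥ v) ≤ 2 * (lamStar K (-(γ • v)) * γ) * (v ⬝ᵥ v) := by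
        calc 2 / V t * (v ⬝ᵥ v) = 2 * (1 / V t * (v ⬝ᵥ v)) := by ring
          _ ≤ 2 * (lamStar K (-(γ • v)) * γ * (v ⬝ᵥ v)) := by linarith
          _ = 2 * (lamStar K (-(γ • v)) * γ) * (v ⬝ᵥ v) := by ring
      linarith
    have hfrac : 2 * (v ⬝ᵥ v) - 2 / V t * (v ⬝ᵥ v) ≤ 2 * c * (V t - 1) := by
      have h1 : 2 * (v ⬝ᵥ v) - 2 / V t * (v ⬝ᵥ v) = 2 * (v ⬝ᵥ v) * ((V t - 1) / V t) := by
        field_simp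
      rw [h1]
      have h2 : (V t - 1) / V t ≤ (V t - 1) / V t := le_refl _
      have h3 : 0 ≤ (V t - 1) / V t := div_nonneg (by linarith) hVpos.le
      calc 2 * (v ⬝ᵥ v) * ((V t - 1) / V t) ≤ 2 * (c * V t) * ((V t - 1) / V t) := by
            apply mul_le_mul_of_nonneg_right _ h3
            linarith [hvvV]
        _ = 2 * c * (V t - 1) := by field_simp
    have hβVt : β * (w t ⬝ᵥ w t) ≤ β * V t :=
      mul_le_mul_of_nonneg_left (hwt.trans hV1) hβ.le
    linarith [hsatterm, hfrac, hamgm, hlmi, hβVt]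
  -- barrier argument
  intro T hT0
  set L : ℝ := 2 * c + 1 with hL
  have hbar : ∀ ε > (0:ℝ), V T ≤ 1 + ε * Real.exp (L * T) := by
    intro ε hε
    have hcont : ContinuousOn V (Icc 0 T) := fun s hs =>
      ((hVd s hs.1).continuousAt).continuousWithinAt
    have hfd : ∀ s ∈ Ico (0:ℝ) T, HasDerivWithinAt V (D s) (Ici s) s := fun s hs =>
      (hVd s hs.1).hasDerivWithinAt
    have hB : ∀ s : ℝ, HasDerivAt (fun r => 1 + ε * Real.exp (L * r))
        (ε * (Real.exp (L * s) * L)) s := by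
      intro s
      have h := (((hasDerivAt_id s).const_mul L).exp.const_mul ε).const_add 1
      simpa using h
    have hbound : ∀ s ∈ Ico (0:ℝ) T, V s = 1 + ε * Real.exp (L * s) →
        D s < ε * (Real.exp (L * s) * L) := by
      intro s hs hVs
      have hexp : 0 < Real.exp (L * s) := Real.exp_pos _
      have hV1 : 1 ≤ V s := by rw [hVs]; nlinarith
      have := claim s hs.1 hV1
      rw [hVs] at this
      have : D s ≤ 2 * c * (ε * Real.exp (L * s)) := by
        convert this using 2; ring
      calc D s ≤ 2 * c * (ε * Real.exp (L * s)) := this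
        _ < ε * (Real.exp (L * s) * L) := by rw [hL]; nlinarith
    have := image_le_of_deriv_right_lt_deriv_boundary hcont hfd
      (by simpa using h0.trans (by nlinarith [Real.exp_pos (L * 0), hε] : (1:ℝ) ≤ 1 + ε * Real.exp (L * 0))) hB hbound
      (right_mem_Icc.mpr hT0)
    exact this
  -- conclude
  have : ∀ δ > (0:ℝ), V T ≤ 1 + δ := by
    intro δ hδ
    have hexp : 0 < Real.exp (L * T) := Real.exp_pos _
    have h := hbar (δ / Real.exp (L * T)) (by positivity)
    calc V T ≤ 1 + δ / Real.exp (L * T) * Real.exp (L * T) := h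
      _ = 1 + δ := by field_simp
  exact le_of_forall_pos_le_add this
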